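/- arXiv:0809.3234 — 6 statements merged into one kernel-verified Lean document; each statement's English description precedes it below -/
import Mathlib

section
/- Let ∧ be a semilattice operation on A and S = ⟨∧⟩. With the notation of the canonical construction (φ_j = ⋀_{i∈Φ_j} x_i, X_i = {j : i ∈ Φ_j}, E = {X_1,...,X_n}, σ: E → [|E|] a bijection, ψ_j = ⋀_{S∈E, j∈S} x_{σ(S)}, Ξ_k = {i ∈ [n] : X_i = σ^{-1}(k)}, ξ_k = ⋀_{i∈Ξ_k} x_i), each Ξ_k is nonempty and ψ_j(ξ_1,...,ξ_{|E|}) = φ_j for all j; consequently f = g(φ_1,...,φ_m) is an S-minor of f' = g(ψ_1,...,ψ_m), and hence f and f' are S-equivalent. -/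
variable {A : Type*}

/-- Composition of an n-ary operation with n m-ary operations. -/
def Comp {n m : ℕ} (f : (Fin n → A) → A) (g : Fin n → (Fin m → A) → A) :
    (Fin m → A) → A := fun a => f fun i => g i a

/-- A clone: contains all projections and is closed under composition. -/
def IsClone (C : ∀ n, Set ((Fin n → A) → A)) : Prop :=
  (∀ (n : ℕ) (i : Fin n), (fun a : Fin n → A => a i) ∈ C n) ∧
  ∀ (n m : ℕ) (f : (Fin n → A) → A) (g : Fin n → (Fin m → A) → A),
    f ∈ C n → (∀ i, g i ∈ C m) → Comp f g ∈ C m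

/-- `f` is a `C`-minor of `g`. -/
def Minor (C : ∀ n, Set ((Fin n → A) → A)) {n m : ℕ}
    (f : (Fin n → A) → A) (g : (Fin m → A) → A) : Prop :=
  ∃ h : Fin m → (Fin n → A) → A, (∀ i, h i ∈ C n) ∧ f = Comp g h

/-- `f` and `g` are `C`-equivalent. -/
def CEquiv (C : ∀ n, Set ((Fin n → A) → A)) {n m : ℕ}
    (f : (Fin n → A) → A) (g : (Fin m → A) → A) : Prop :=
  Minor C f g ∧ Minor C g f

/-- The clone generated by a family of operations. -/
def CloneGen (F : ∀ n, Set ((Fin n → A) → A)) : ∀ n, Set ((Fin n → A) → A) :=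
  fun n => {f | ∀ C, IsClone C → (∀ k, F k ⊆ C k) → f ∈ C n}

/-- The family consisting of just the binary semilattice (meet) operation. -/
def meetFam (A : Type*) [SemilatticeInf A] : ∀ n, Set ((Fin n → A) → A)
  | 2 => {fun a => a 0 ⊓ a 1}
  | _ => ∅

/-- The clone generated by the semilattice operation `⊓`. -/
def SClone (A : Type*) [SemilatticeInf A] : ∀ n, Set ((Fin n → A) → A) :=
  CloneGen (meetFam A)

lemma cloneGen_isClone {A : Type*} (F : ∀ n, Set ((Fin n → A) → A)) :
    IsClone (CloneGen F) := by
  constructor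
  · intro n i C hC _
    exact hC.1 n i
  · intro n m f g hf hg C hC hF
    exact hC.2 n m f g (hf C hC hF) (fun i => hg i C hC hF)

lemma proj_mem {A : Type*} [SemilatticeInf A] {n : ℕ} (i : Fin n) :
    (fun a : Fin n → A => a i) ∈ SClone A n :=
  fun C hC _ => hC.1 n i

lemma inf_mem {A : Type*} [SemilatticeInf A] {n : ℕ}
    {p q : (Fin n → A) → A} (hp : p ∈ SClone A n) (hq : q ∈ SClone A n) :
    (fun x => p x ⊓ q x) ∈ SClone A n := by
  have h := (cloneGen_isClone (meetFam A)).2 2 n (fun a => a 0 ⊓ a 1) ![p, q]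
    (fun C _ hF => hF 2 rfl) ?_
  · exact h
  · intro i
    fin_cases i <;> simpa

lemma inf'_mem {A : Type*} [SemilatticeInf A] {n : ℕ}
    (T : Finset (Fin n)) (hT : T.Nonempty) :
    (fun x : Fin n → A => T.inf' hT x) ∈ SClone A n := by
  induction hT using Finset.Nonempty.cons_induction with
  | singleton a => simpa using proj_mem a
  | cons a s h hs ih =>
      have heq : (fun x : Fin n → A => (Finset.cons a s h).inf' (Finset.cons_nonempty h) x)
          = fun x => x a ⊓ s.inf' hs x := by
        funext x
        exact Finset.inf'_cons (H := hs) (f := x)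
      rw [heq]
      exact inf_mem (proj_mem a) ih

/-- In the canonical construction, each `Ξ_k` is nonempty, substituting the
meets `ξ_k = ⋀_{i ∈ Ξ_k} x_i` into `ψ_j` recovers `φ_j`; consequently
`f = g(φ_1, …, φ_m)` is an `S`-minor of `f' = g(ψ_1, …, ψ_m)` and `f` and `f'`
are `S`-equivalent. -/
theorem stmt9 {A : Type*} [SemilatticeInf A] {n m : ℕ}
    (Φ : Fin m → Finset (Fin n)) (hΦ : ∀ j, (Φ j).Nonempty)
    (φ : Fin m → (Fin n → A) → A)
    (hφ : ∀ j, φ j = fun x => (Φ j).inf' (hΦ j) x)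
    (g : (Fin m → A) → A) (f : (Fin n → A) → A) (hf : f = Comp g φ)
    (X : Fin n → Finset (Fin m))
    (hX : ∀ i, X i = Finset.univ.filter fun j => i ∈ Φ j)
    (E : Finset (Finset (Fin m))) (hE : E = Finset.image X Finset.univ)
    (σ : Finset (Fin m) → Fin E.card)
    (hσ : Set.BijOn σ (↑E) Set.univ)
    (hne : ∀ j : Fin m, (E.filter fun S => j ∈ S).Nonempty)
    (ψ : Fin m → (Fin E.card → A) → A)
    (hψ : ∀ j, ψ j = fun y => (E.filter fun S => j ∈ S).inf' (hne j)
      fun S => y (σ S))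
    (f' : (Fin E.card → A) → A) (hf' : f' = Comp g ψ)
    (Ξ : Fin E.card → Finset (Fin n))
    (hΞ : ∀ k, Ξ k = Finset.univ.filter fun i => σ (X i) = k) :
    ∃ hne' : ∀ k, (Ξ k).Nonempty,
      (∀ j, Comp (ψ j) (fun k x => (Ξ k).inf' (hne' k) x) = φ j) ∧
      Minor (SClone A) f f' ∧ CEquiv (SClone A) f f' := by

  have hXE : ∀ i, X i ∈ E := by
    intro i; rw [hE]; exact Finset.mem_image_of_mem X (Finset.mem_univ i)
  have hmemX : ∀ i j, j ∈ X i ↔ i ∈ Φ j := by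
    intro i j; rw [hX]; simp
  have hinj : ∀ i S, S ∈ E → σ (X i) = σ S → X i = S := by
    intro i S hS h
    exact hσ.injOn (hXE i) hS h
  have hne' : ∀ k, (Ξ k).Nonempty := by
    intro k
    obtain ⟨S, hS, hSk⟩ := hσ.surjOn (Set.mem_univ k)
    rw [hE] at hS
    simp only [Finset.coe_image, Set.mem_image] at hS
    obtain ⟨i, _, hi⟩ := hS
    refine ⟨i, ?_⟩
    rw [hΞ]
    simp [hi, hSk]
  have hmemΞ : ∀ k i, i ∈ Ξ k ↔ σ (X i) = k := by
    intro k i; rw [hΞ]; simp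
  refine ⟨hne', ?_, ?_⟩
  · -- ψ_j (ξ_1,…) = φ_j
    intro j
    funext x
    rw [hψ, hφ]
    simp only [Comp]
    apply le_antisymm
    · apply Finset.le_inf'
      intro i hi
      have hj : X i ∈ E.filter fun S => j ∈ S := by
        simp only [Finset.mem_filter]
        exact ⟨hXE i, (hmemX i j).2 hi⟩
      refine le_trans (Finset.inf'_le _ hj) (Finset.inf'_le _ ?_)
      exact (hmemΞ _ i).2 rfl
    · apply Finset.le_inf'
      intro S hS
      simp only [Finset.mem_filter] at hS
      apply Finset.le_inf'
      intro i hi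
      have hXi : X i = S := hinj i S hS.1 ((hmemΞ _ i).1 hi)
      exact Finset.inf'_le _ ((hmemX i j).1 (hXi ▸ hS.2))
  · -- Minor and CEquiv
    have key : ∀ j, Comp (ψ j) (fun k x => (Ξ k).inf' (hne' k) x) = φ j := by
      intro j
      funext x
      rw [hψ, hφ]
      simp only [Comp]
      apply le_antisymm
      · apply Finset.le_inf'
        intro i hi
        have hj : X i ∈ E.filter fun S => j ∈ S := by
          simp only [Finset.mem_filter]
          exact ⟨hXE i, (hmemX i j).2 hi⟩
        refine le_trans (Finset.inf'_le _ hj) (Finset.inf'_le _ ?_)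
        exact (hmemΞ _ i).2 rfl
      · apply Finset.le_inf'
        intro S hS
        simp only [Finset.mem_filter] at hS
        apply Finset.le_inf'
        intro i hi
        have hXi : X i = S := hinj i S hS.1 ((hmemΞ _ i).1 hi)
        exact Finset.inf'_le _ ((hmemX i j).1 (hXi ▸ hS.2))
    have minor1 : Minor (SClone A) f f' := by
      refine ⟨fun k x => (Ξ k).inf' (hne' k) x, fun k => inf'_mem _ _, ?_⟩
      funext x
      rw [hf, hf']
      simp only [Comp]
      congr 1
      funext j
      have := congrFun (key j) x
      simpa [Comp] using this.symm
    have minor2 : Minor (SClone A) f' f := by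
      refine ⟨fun i y => y (σ (X i)), fun i => proj_mem _, ?_⟩
      funext y
      rw [hf, hf']
      simp only [Comp]
      congr 1
      funext j
      rw [hψ, hφ]
      apply le_antisymm
      · apply Finset.le_inf'
        intro i hi
        have hj : X i ∈ E.filter fun S => j ∈ S := by
          simp only [Finset.mem_filter]
          exact ⟨hXE i, (hmemX i j).2 hi⟩
        exact Finset.inf'_le _ hj
      · apply Finset.le_inf'
        intro S hS
        simp only [Finset.mem_filter] at hS
        obtain ⟨hSE, hjS⟩ := hS
        rw [hE] at hSE
        simp only [Finset.mem_image, Finset.mem_univ, true_and] at hSE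
        obtain ⟨i, hi⟩ := hSE
        have hiΦ : i ∈ Φ j := (hmemX i j).1 (hi ▸ hjS)
        calc (Φ j).inf' (hΦ j) (fun i => y (σ (X i))) ≤ y (σ (X i)) :=
              Finset.inf'_le _ hiΦ
          _ = y (σ S) := by rw [hi]
    exact ⟨minor1, minor1, minor2⟩
end

section
/- Let ∧ be a semilattice operation on A and S = ⟨∧⟩. Suppose f_1 = g(φ_1,...,φ_m) and f_2 = g(φ'_1,...,φ'_m) are S-decompositions with the same outer function g, where φ_j = ⋀_{i∈Φ_j} x_i (on n variables) and φ'_j = ⋀_{i∈Φ'_j} x_i (on n' variables). If the associated set systems coincide, i.e., {X_1,...,X_n} = {X'_1,...,X'_{n'}} where X_i = {j : i ∈ Φ_j} and X'_i = {j : i ∈ Φ'_j}, then f_1 and f_2 are S-equivalent. -/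
variable {A : Type*}

lemma inf'_mem_SClone {A : Type*} [SemilatticeInf A] {n : ℕ}
    (s : Finset (Fin n)) (hs : s.Nonempty) :
    (fun x : Fin n → A => s.inf' hs x) ∈ SClone A n := by
  intro C hC hF
  have hmeet : (fun a : Fin 2 → A => a 0 ⊓ a 1) ∈ C 2 := hF 2 rfl
  induction hs using Finset.Nonempty.cons_induction with
  | singleton a =>
      have : (fun x : Fin n → A => ({a} : Finset (Fin n)).inf' (Finset.singleton_nonempty a) x)
          = fun x : Fin n → A => x a := by
        funext x; simp
      rw [this]; exact hC.1 n a
  | cons a s h hs ih =>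
      have hcomp := hC.2 2 n (fun a : Fin 2 → A => a 0 ⊓ a 1)
        ![fun x => x a, fun x : Fin n → A => s.inf' hs x] hmeet ?_
      · convert hcomp using 1
        funext x
        simp [Comp, Finset.inf'_insert hs]
      · intro i
        fin_cases i
        · exact hC.1 n a
        · exact ih

lemma minor_aux {A : Type*} [SemilatticeInf A] {n n' m : ℕ}
    (g : (Fin m → A) → A)
    (Φ : Fin m → Finset (Fin n)) (hΦ : ∀ j, (Φ j).Nonempty)
    (Φ' : Fin m → Finset (Fin n')) (hΦ' : ∀ j, (Φ' j).Nonempty)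
    (hXX : Finset.image (fun i => Finset.univ.filter fun j => i ∈ Φ j)
        (Finset.univ : Finset (Fin n)) =
      Finset.image (fun i => Finset.univ.filter fun j => i ∈ Φ' j)
        (Finset.univ : Finset (Fin n'))) :
    Minor (SClone A) (Comp g fun j x => (Φ j).inf' (hΦ j) x)
      (Comp g fun j x => (Φ' j).inf' (hΦ' j) x) := by
  set X : Fin n → Finset (Fin m) := fun i => Finset.univ.filter fun j => i ∈ Φ j with hX
  set X' : Fin n' → Finset (Fin m) := fun i => Finset.univ.filter fun j => i ∈ Φ' j with hX'
  -- for each i', the set of i with X i = X' i' is nonempty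
  have hT : ∀ i' : Fin n', (Finset.univ.filter fun i : Fin n => X i = X' i').Nonempty := by
    intro i'
    have : X' i' ∈ Finset.image X (Finset.univ : Finset (Fin n)) := by
      rw [hXX]; exact Finset.mem_image_of_mem _ (Finset.mem_univ i')
    obtain ⟨i, -, hi⟩ := Finset.mem_image.mp this
    exact ⟨i, Finset.mem_filter.mpr ⟨Finset.mem_univ i, hi⟩⟩
  refine ⟨fun i' x => (Finset.univ.filter fun i : Fin n => X i = X' i').inf' (hT i') x,
    fun i' => inf'_mem_SClone _ _, ?_⟩
  funext x
  simp only [Comp]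
  congr 1
  funext j
  apply le_antisymm
  · apply Finset.le_inf'
    intro i' hi'
    apply Finset.le_inf'
    intro i hi
    rw [Finset.mem_filter] at hi
    apply Finset.inf'_le
    -- i ∈ Φ j since j ∈ X' i' = X i
    have hj : j ∈ X' i' := by
      simp only [hX', Finset.mem_filter]; exact ⟨Finset.mem_univ j, hi'⟩
    rw [← hi.2] at hj
    simp only [hX, Finset.mem_filter] at hj
    exact hj.2
  · apply Finset.le_inf'
    intro i hi
    have : X i ∈ Finset.image X' (Finset.univ : Finset (Fin n')) := by
      rw [← hXX]; exact Finset.mem_image_of_mem _ (Finset.mem_univ i)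
    obtain ⟨i', -, hi'⟩ := Finset.mem_image.mp this
    have hji' : i' ∈ Φ' j := by
      have hj : j ∈ X i := by
        simp only [hX, Finset.mem_filter]; exact ⟨Finset.mem_univ j, hi⟩
      rw [← hi'] at hj
      simpa [hX'] using hj
    calc ((Φ' j).inf' (hΦ' j) fun i' =>
            (Finset.univ.filter fun i : Fin n => X i = X' i').inf' (hT i') x)
        ≤ (Finset.univ.filter fun i₀ : Fin n => X i₀ = X' i').inf' (hT i') x :=
          Finset.inf'_le _ hji'
      _ ≤ x i := Finset.inf'_le _ (Finset.mem_filter.mpr ⟨Finset.mem_univ i, hi'.symm⟩)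

/-- Two `S`-decompositions with the same outer function and the same associated
set system yield `S`-equivalent functions. -/
theorem stmt10 {A : Type*} [SemilatticeInf A] {n n' m : ℕ}
    (g : (Fin m → A) → A)
    (Φ : Fin m → Finset (Fin n)) (hΦ : ∀ j, (Φ j).Nonempty)
    (Φ' : Fin m → Finset (Fin n')) (hΦ' : ∀ j, (Φ' j).Nonempty)
    (φ : Fin m → (Fin n → A) → A)
    (hφ : ∀ j, φ j = fun x => (Φ j).inf' (hΦ j) x)
    (φ' : Fin m → (Fin n' → A) → A)
    (hφ' : ∀ j, φ' j = fun x => (Φ' j).inf' (hΦ' j) x)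
    (f₁ : (Fin n → A) → A) (hf₁ : f₁ = Comp g φ)
    (f₂ : (Fin n' → A) → A) (hf₂ : f₂ = Comp g φ')
    (hXX : Finset.image (fun i => Finset.univ.filter fun j => i ∈ Φ j)
        (Finset.univ : Finset (Fin n)) =
      Finset.image (fun i => Finset.univ.filter fun j => i ∈ Φ' j)
        (Finset.univ : Finset (Fin n'))) :
    CEquiv (SClone A) f₁ f₂ := by
  subst hf₁ hf₂
  have hφe : φ = fun j x => (Φ j).inf' (hΦ j) x := funext hφ
  have hφ'e : φ' = fun j x => (Φ' j).inf' (hΦ' j) x := funext hφ'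
  subst hφe hφ'e
  exact ⟨minor_aux g Φ hΦ Φ' hΦ' hXX, minor_aux g Φ' hΦ' Φ hΦ hXX.symm⟩
end

section
/- Let ∧ be a semilattice operation on A and S = ⟨∧⟩. For every operation g: A^m → A, the number of S-equivalence classes of operations of the form g(φ_1,...,φ_m) with φ_1,...,φ_m ∈ S (of a common arity) is at most the number of subsets of the power set of [m], i.e., at most 2^(2^m); in particular it is finite. -/
variable {A : Type*}

section Aux

variable [SemilatticeInf A]

/-- Every meet of a nonempty set of variables belongs to the clone. -/
lemma inf'_mem_SClone_s11 {n : ℕ} (T : Finset (Fin n)) (h : T.Nonempty) :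
    (fun a : Fin n → A => T.inf' h a) ∈ SClone A n := by
  induction h using Finset.Nonempty.cons_induction with
  | singleton j =>
      have e : (fun a : Fin n → A =>
          ({j} : Finset (Fin n)).inf' (Finset.singleton_nonempty j) a)
          = fun a : Fin n → A => a j := by
        funext a; simp
      rw [e]
      exact fun C hC _ => hC.1 n j
  | cons j T hj hT ih =>
      have e : (fun a : Fin n → A =>
            (Finset.cons j T hj).inf' (Finset.cons_nonempty hj) a)
          = Comp (fun a : Fin 2 → A => a 0 ⊓ a 1)
              ![fun a : Fin n → A => a j, fun a : Fin n → A => T.inf' hT a] := by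
        funext a
        rw [Finset.inf'_cons (H := hT)]
        simp [Comp]
      rw [e]
      intro C hC hF
      refine hC.2 2 n _ _ (hF 2 rfl) ?_
      intro i
      fin_cases i
      · exact hC.1 n j
      · exact ih C hC hF

/-- Every member of the clone is a meet of a nonempty set of variables. -/
lemma SClone_sub {n : ℕ} (f : (Fin n → A) → A) (hf : f ∈ SClone A n) :
    ∃ (T : Finset (Fin n)) (h : T.Nonempty), f = fun a => T.inf' h a := by
  classical
  refine hf (fun k => {f : (Fin k → A) → A |
      ∃ (T : Finset (Fin k)) (h : T.Nonempty), f = fun a => T.inf' h a}) ⟨?_, ?_⟩ ?_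
  · intro k i
    exact ⟨{i}, Finset.singleton_nonempty i, by funext a; simp⟩
  · rintro k l f g ⟨T, hT, rfl⟩ hg
    choose U hU hgU using hg
    refine ⟨T.biUnion U, hT.biUnion fun b _ => hU b, ?_⟩
    funext a
    have e : (fun i => g i a) = fun i => (U i).inf' (hU i) a := by
      funext i; rw [hgU i]
    show T.inf' hT (fun i => g i a) = _
    rw [e, ← Finset.inf'_biUnion a hT hU]
  · intro k
    match k with
    | 0 => exact fun f hf => hf.elim
    | 1 => exact fun f hf => hf.elim
    | 2 =>
      intro f hf
      have hf' : f = fun a : Fin 2 → A => a 0 ⊓ a 1 := hf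
      subst hf'
      refine ⟨{0, 1}, ⟨0, by simp⟩, ?_⟩
      funext a
      rw [Finset.inf'_insert (H := Finset.singleton_nonempty (1 : Fin 2))]
      simp
    | (k + 3) => exact fun f hf => hf.elim

/-- The "column type" of coordinate `j` w.r.t. a family of variable sets. -/
def colType {m n : ℕ} (T : Fin m → Finset (Fin n)) : Fin n → (Fin m → Bool) :=
  fun j i => decide (j ∈ T i)

/-- The invariant: the set of column types. -/
noncomputable def invT {m n : ℕ} (T : Fin m → Finset (Fin n)) : Finset (Fin m → Bool) := by
  classical exact Finset.image (colType T) Finset.univ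

lemma mem_invT {m n : ℕ} (T : Fin m → Finset (Fin n)) (j : Fin n) :
    colType T j ∈ invT T := by
  classical
  simp only [invT]
  exact Finset.mem_image_of_mem _ (Finset.mem_univ j)

lemma key_minor {m n n' : ℕ} (g : (Fin m → A) → A)
    (T : Fin m → Finset (Fin n)) (T' : Fin m → Finset (Fin n'))
    (hT : ∀ i, (T i).Nonempty) (hT' : ∀ i, (T' i).Nonempty)
    (hinv : invT T = invT T') :
    Minor (SClone A) (Comp g fun i a => (T i).inf' (hT i) a)
      (Comp g fun i a => (T' i).inf' (hT' i) a) := by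
  classical
  have hex : ∀ j' : Fin n', ∃ j : Fin n, colType T j = colType T' j' := by
    intro j'
    have h1 : colType T' j' ∈ invT T := by rw [hinv]; exact mem_invT T' j'
    simp only [invT, Finset.mem_image] at h1
    rcases h1 with ⟨j, _, hj⟩
    exact ⟨j, hj⟩
  set U : Fin n' → Finset (Fin n) :=
    fun j' => Finset.univ.filter (fun j => colType T j = colType T' j') with hU
  have hUne : ∀ j', (U j').Nonempty := by
    intro j'
    rcases hex j' with ⟨j, hj⟩
    exact ⟨j, by simp [hU, hj]⟩
  refine ⟨fun j' a => (U j').inf' (hUne j') a, fun j' => inf'_mem_SClone_s11 _ _, ?_⟩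
  funext a
  show g _ = g _
  congr 1
  funext i
  show (T i).inf' (hT i) a = (T' i).inf' (hT' i) fun j' => (U j').inf' (hUne j') a
  rw [← Finset.inf'_biUnion a (hT' i) hUne]
  have hset : T i = (T' i).biUnion U := by
    ext j
    simp only [Finset.mem_biUnion, hU, Finset.mem_filter, Finset.mem_univ, true_and]
    constructor
    · intro hj
      have h1 : colType T j ∈ invT T' := by rw [← hinv]; exact mem_invT T j
      simp only [invT, Finset.mem_image] at h1
      rcases h1 with ⟨j', _, hj'⟩
      refine ⟨j', ?_, hj'.symm⟩
      have h2 : colType T' j' i = true := by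
        rw [hj']
        simpa [colType] using hj
      simpa [colType] using h2
    · rintro ⟨j', hj', hjj'⟩
      have h2 : colType T j i = true := by
        rw [hjj']
        simpa [colType] using hj'
      simpa [colType] using h2
  exact Finset.inf'_congr (H := hT i) hset (fun _ _ => rfl)

end Aux

/-- For a fixed outer function `g : A^m → A`, the operations of the form
`g(φ_1, …, φ_m)` with all `φ_i ∈ S` fall into at most `2 ^ 2 ^ m` many
`S`-equivalence classes; in particular finitely many. -/
theorem stmt11 {A : Type*} [SemilatticeInf A] {m : ℕ} (g : (Fin m → A) → A) :
    ∃ R : Set (Σ n, (Fin n → A) → A), R.Finite ∧ R.ncard ≤ 2 ^ 2 ^ m ∧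
      ∀ (n : ℕ) (φ : Fin m → (Fin n → A) → A), (∀ i, φ i ∈ SClone A n) →
        ∃ r ∈ R, CEquiv (SClone A) (Comp g φ) r.2 := by
  classical
  set D : Finset (Fin m → Bool) → Prop :=
    fun 𝒮 => ∃ (n : ℕ) (T : Fin m → Finset (Fin n)) (hne : ∀ i, (T i).Nonempty),
      invT T = 𝒮 with hD
  have hNE : Nonempty (Σ n, (Fin n → A) → A) := ⟨⟨1, fun a => a 0⟩⟩
  have hch : ∀ 𝒮 : Finset (Fin m → Bool), D 𝒮 →
      ∃ r : Σ n, (Fin n → A) → A, ∃ (n : ℕ) (T : Fin m → Finset (Fin n))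
        (hne : ∀ i, (T i).Nonempty),
        invT T = 𝒮 ∧ r = ⟨n, Comp g fun i a => (T i).inf' (hne i) a⟩ := by
    rintro 𝒮 ⟨n, T, hne, hinv⟩
    exact ⟨⟨n, Comp g fun i a => (T i).inf' (hne i) a⟩, n, T, hne, hinv, rfl⟩
  choose! r hr using hch
  refine ⟨r '' {𝒮 | D 𝒮}, (Set.toFinite _).image r, ?_, ?_⟩
  · calc (r '' {𝒮 | D 𝒮}).ncard ≤ ({𝒮 | D 𝒮} : Set (Finset (Fin m → Bool))).ncard :=
          Set.ncard_image_le (Set.toFinite _)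
      _ ≤ (Set.univ : Set (Finset (Fin m → Bool))).ncard :=
          Set.ncard_le_ncard (Set.subset_univ _) (Set.toFinite _)
      _ = 2 ^ 2 ^ m := by
          rw [Set.ncard_univ, Nat.card_eq_fintype_card, Fintype.card_finset]
          congr 1
          simp
  · intro n φ hφ
    choose T hne hφT using fun i => SClone_sub (φ i) (hφ i)
    have hphi : φ = fun i => fun a => (T i).inf' (hne i) a := funext hφT
    have hDinv : D (invT T) := ⟨n, T, hne, rfl⟩
    obtain ⟨n', T', hne', hinv', hreq⟩ := hr (invT T) hDinv
    refine ⟨r (invT T), ⟨invT T, hDinv, rfl⟩, ?_⟩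
    rw [hreq, hphi]
    exact ⟨key_minor g T T' hne hne' hinv'.symm, key_minor g T' T hne' hne hinv'⟩
end

section
/- Let ∧ be a semilattice operation on a nonempty set A, and let S = ⟨∧⟩ be the clone generated by ∧. Then the partial order induced by the S-minor relation on the S-equivalence classes of operations on A satisfies the descending chain condition: every descending chain [f_1] ⊇ [f_2] ⊇ ... (i.e., f_{k+1} an S-minor of f_k for all k) is eventually constant (f_k S-equivalent to f_{k+1} for all sufficiently large k). -/
set_option linter.unusedSectionVars false
set_option linter.unusedVariables false
set_option linter.unnecessarySimpa false


variable {A : Type*}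

section Aux
variable [SemilatticeInf A]

/-- the family of "meet over a nonempty set of coordinates" functions -/
def MC (A : Type*) [SemilatticeInf A] : ∀ n, Set ((Fin n → A) → A) :=
  fun n => {f | ∃ (B : Finset (Fin n)) (hB : B.Nonempty), f = fun a => B.inf' hB a}

lemma isClone_cloneGen (F : ∀ n, Set ((Fin n → A) → A)) : IsClone (CloneGen F) := by
  constructor
  · intro n i C hC hF; exact hC.1 n i
  · intro n m f g hf hg C hC hF
    exact hC.2 n m f g (hf C hC hF) (fun i => hg i C hC hF)

lemma subset_cloneGen (F : ∀ n, Set ((Fin n → A) → A)) (k : ℕ) : F k ⊆ CloneGen F k :=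
  fun f hf C hC hF => hF k hf

lemma isClone_MC : IsClone (MC A) := by
  constructor
  · intro n i
    exact ⟨{i}, Finset.singleton_nonempty i, by funext a; simp⟩
  · rintro n m f g ⟨B, hB, rfl⟩ hg
    choose B' hB' hg' using hg
    refine ⟨B.biUnion B', hB.biUnion fun b _ => hB' b, ?_⟩
    funext a
    refine Eq.symm ?_
    calc (B.biUnion B').inf' (hB.biUnion fun b _ => hB' b) a
        = B.inf' hB (fun i => (B' i).inf' (hB' i) a) := Finset.inf'_biUnion (f := a) hB hB'
      _ = Comp (fun a => B.inf' hB a) g a :=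
          Finset.inf'_congr hB rfl (fun i _ => by rw [hg' i])

lemma SClone_sub_MC (n : ℕ) : SClone A n ⊆ MC A n := by
  intro f hf
  refine hf (MC A) isClone_MC ?_
  intro k
  match k with
  | 2 => rintro f (rfl : f = _)
         exact ⟨{0, 1}, by simp, by funext a; simp [Finset.inf'_insert, Finset.inf'_singleton]⟩
  | 0 => exact fun f h => h.elim
  | 1 => exact fun f h => h.elim
  | (k+3) => exact fun f h => h.elim

lemma proj_mem_SClone (n : ℕ) (i : Fin n) : (fun a : Fin n → A => a i) ∈ SClone A n :=
  (isClone_cloneGen _).1 n i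

lemma meet_mem_SClone : (fun a : Fin 2 → A => a 0 ⊓ a 1) ∈ SClone A 2 :=
  subset_cloneGen (meetFam A) 2 rfl

lemma MC_sub_SClone (n : ℕ) : MC A n ⊆ SClone A n := by
  rintro f ⟨B, hB, rfl⟩
  induction hB using Finset.Nonempty.cons_induction with
  | singleton i => simpa using proj_mem_SClone n i
  | cons i s hi hs ih =>
    have he : (fun a : Fin n → A => (Finset.cons i s hi).inf' (Finset.cons_nonempty hi) a)
        = Comp (fun a : Fin 2 → A => a 0 ⊓ a 1)
            ![fun a => a i, fun a => s.inf' hs a] := by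
      funext a
      rw [Finset.inf'_cons (H := hs)]
      simp [Comp]
    rw [he]
    refine (isClone_cloneGen _).2 2 n _ _ meet_mem_SClone ?_
    intro j; fin_cases j
    · exact proj_mem_SClone n i
    · exact ih

lemma SClone_zero_empty (f : (Fin 0 → A) → A) : f ∉ SClone A 0 := by
  intro hf
  obtain ⟨B, hB, -⟩ := SClone_sub_MC 0 hf
  obtain ⟨i, -⟩ := hB
  exact i.elim0

lemma minor_refl {n : ℕ} (f : (Fin n → A) → A) : Minor (SClone A) f f := by
  refine ⟨fun i a => a i, fun i => proj_mem_SClone n i, ?_⟩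
  funext a; rfl

lemma minor_trans {n m p : ℕ} {f : (Fin n → A) → A} {g : (Fin m → A) → A}
    {e : (Fin p → A) → A} (hfg : Minor (SClone A) f g) (hge : Minor (SClone A) g e) :
    Minor (SClone A) f e := by
  obtain ⟨h, hh, rfl⟩ := hfg
  obtain ⟨H, hH, rfl⟩ := hge
  exact ⟨fun i => Comp (H i) h, fun i => (isClone_cloneGen _).2 m n (H i) h (hH i) hh, rfl⟩

lemma minor_nullary_eq {f g : (Fin 0 → A) → A}
    (hfg : Minor (SClone A) f g) : f = g := by
  obtain ⟨h, -, rfl⟩ := hfg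
  funext a
  exact congrArg g (Subsingleton.elim _ _)

lemma const_of_minor_nullary {n m : ℕ} {f : (Fin n → A) → A} {g : (Fin m → A) → A}
    (hm : m = 0) (hfg : Minor (SClone A) f g) : ∀ a b, f a = f b := by
  subst hm
  obtain ⟨h, -, rfl⟩ := hfg
  intro a b
  exact congrArg g (Subsingleton.elim _ _)

lemma arity_pos_of_minor {n m : ℕ} {f : (Fin n → A) → A} {g : (Fin m → A) → A}
    (hm : m ≠ 0) (hfg : Minor (SClone A) f g) : n ≠ 0 := by
  rintro rfl
  obtain ⟨h, hh, -⟩ := hfg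
  exact SClone_zero_empty (h ⟨0, Nat.pos_of_ne_zero hm⟩) (hh _)

lemma const_cross_of_minor {n m : ℕ} {f : (Fin n → A) → A} {g : (Fin m → A) → A}
    (hg : ∀ a b, g a = g b) (hfg : Minor (SClone A) f g) : ∀ a b, f a = g b := by
  obtain ⟨h, -, rfl⟩ := hfg
  intro a b
  exact hg _ _

lemma minor_of_const_cross {n m : ℕ} (hn : n ≠ 0) {f : (Fin n → A) → A}
    {g : (Fin m → A) → A} (h : ∀ a b, f a = g b) : Minor (SClone A) f g := by
  refine ⟨fun _ a => a ⟨0, Nat.pos_of_ne_zero hn⟩, fun i => proj_mem_SClone n _, ?_⟩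
  funext a
  exact h a _

/-! ### Canonical minors -/

noncomputable def σm (m : ℕ) : Finset (Fin m) ≃ Fin (2 ^ m) :=
  Fintype.equivFinOfCardEq (by simp [Fintype.card_finset])

def Adm {m : ℕ} (𝒯 : Finset (Finset (Fin m))) : Prop :=
  (∀ t ∈ 𝒯, t.Nonempty) ∧ ∀ i : Fin m, ∃ t ∈ 𝒯, i ∈ t

noncomputable def Pack {m : ℕ} (g : (Fin m → A) → A) (𝒯 : Finset (Finset (Fin m))) :
    (Fin (2 ^ m) → A) → A :=
  fun x => g fun i =>
    if h : (𝒯.filter (fun t => i ∈ t)).Nonempty then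
      (𝒯.filter (fun t => i ∈ t)).inf' h (fun t => x (σm m t))
    else x (σm m ∅)

lemma pack_minor {m : ℕ} (g : (Fin m → A) → A) (𝒯 : Finset (Finset (Fin m)))
    (hA : Adm 𝒯) : Minor (SClone A) (Pack g 𝒯) g := by
  have hne : ∀ i : Fin m, (𝒯.filter (fun t => i ∈ t)).Nonempty := by
    intro i
    obtain ⟨t, ht, hit⟩ := hA.2 i
    exact ⟨t, Finset.mem_filter.2 ⟨ht, hit⟩⟩
  refine ⟨fun i x => ((𝒯.filter (fun t => i ∈ t)).image (σm m)).inf'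
      ((hne i).image _) x, ?_, ?_⟩
  · intro i
    exact MC_sub_SClone _ ⟨_, (hne i).image _, rfl⟩
  · funext x
    show g _ = g _
    congr 1
    funext i
    rw [dif_pos (hne i)]
    exact (Finset.inf'_image ((hne i).image _) x).symm

lemma filter_mem_nonempty {m : ℕ} {𝒯 : Finset (Finset (Fin m))} (hA : Adm 𝒯) (i : Fin m) :
    (𝒯.filter (fun t => i ∈ t)).Nonempty := by
  obtain ⟨t, ht, hit⟩ := hA.2 i
  exact ⟨t, Finset.mem_filter.2 ⟨ht, hit⟩⟩

lemma canonical {m n : ℕ} (hn : n ≠ 0) (g : (Fin m → A) → A)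
    (B : Fin m → Finset (Fin n)) (hB : ∀ i, (B i).Nonempty) :
    ∃ 𝒯 : Finset (Finset (Fin m)), Adm 𝒯 ∧
      CEquiv (SClone A) (Comp g (fun i a => (B i).inf' (hB i) a)) (Pack g 𝒯) := by
  classical
  set type : Fin n → Finset (Fin m) := fun j => Finset.univ.filter (fun i => j ∈ B i)
    with htype
  have htype_mem : ∀ (i : Fin m) (j : Fin n), i ∈ type j ↔ j ∈ B i := by
    intro i j; simp [htype]
  set 𝒯 : Finset (Finset (Fin m)) :=
    (Finset.univ.filter fun j : Fin n => (type j).Nonempty).image type with h𝒯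
  have hmem𝒯 : ∀ t, t ∈ 𝒯 ↔ ∃ j, (type j).Nonempty ∧ type j = t := by
    intro t; simp [h𝒯]
  have hAdm : Adm 𝒯 := by
    constructor
    · intro t ht
      obtain ⟨j, hj, rfl⟩ := (hmem𝒯 t).1 ht
      exact hj
    · intro i
      obtain ⟨j, hj⟩ := hB i
      exact ⟨type j, (hmem𝒯 _).2 ⟨j, ⟨i, (htype_mem i j).2 hj⟩, rfl⟩, (htype_mem i j).2 hj⟩
  have hne : ∀ i, (𝒯.filter (fun t => i ∈ t)).Nonempty := filter_mem_nonempty hAdm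
  have hTi : ∀ i : Fin m, 𝒯.filter (fun t => i ∈ t) = (B i).image type := by
    intro i
    ext t
    constructor
    · intro ht
      obtain ⟨ht𝒯, hit⟩ := Finset.mem_filter.1 ht
      obtain ⟨j, hj, rfl⟩ := (hmem𝒯 _).1 ht𝒯
      exact Finset.mem_image.2 ⟨j, (htype_mem i j).1 hit, rfl⟩
    · intro ht
      obtain ⟨j, hj, rfl⟩ := Finset.mem_image.1 ht
      exact Finset.mem_filter.2 ⟨(hmem𝒯 _).2 ⟨j, ⟨i, (htype_mem i j).2 hj⟩, rfl⟩,
        (htype_mem i j).2 hj⟩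
  refine ⟨𝒯, hAdm, ?_, ?_⟩
  · -- Comp g meets is a minor of Pack g 𝒯
    set Q : Finset (Fin m) → Finset (Fin n) :=
      fun t => Finset.univ.filter (fun j => (type j).Nonempty ∧ type j = t) with hQ
    set Q' : Finset (Fin m) → Finset (Fin n) :=
      fun t => if h : (Q t).Nonempty then Q t else {⟨0, Nat.pos_of_ne_zero hn⟩} with hQ'def
    have hQ' : ∀ t, (Q' t).Nonempty := by
      intro t
      by_cases h : (Q t).Nonempty
      · simpa [hQ'def, h] using h
      · simp [hQ'def, h]
    have hQ'eq : ∀ t ∈ 𝒯, Q' t = Q t := by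
      intro t ht
      obtain ⟨j, hj, rfl⟩ := (hmem𝒯 _).1 ht
      have : j ∈ Q (type j) := Finset.mem_filter.2 ⟨Finset.mem_univ _, hj, rfl⟩
      rw [hQ'def]
      exact dif_pos ⟨j, this⟩
    have hBiU : ∀ i : Fin m, (𝒯.filter (fun t => i ∈ t)).biUnion Q' = B i := by
      intro i
      ext j
      constructor
      · intro hj
        obtain ⟨t, ht, hjt⟩ := Finset.mem_biUnion.1 hj
        obtain ⟨ht𝒯, hit⟩ := Finset.mem_filter.1 ht
        rw [hQ'eq t ht𝒯] at hjt
        obtain ⟨-, -, rfl⟩ := Finset.mem_filter.1 hjt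
        exact (htype_mem i j).1 hit
      · intro hj
        have hit : i ∈ type j := (htype_mem i j).2 hj
        have hty : type j ∈ 𝒯 := (hmem𝒯 _).2 ⟨j, ⟨i, hit⟩, rfl⟩
        refine Finset.mem_biUnion.2 ⟨type j, Finset.mem_filter.2 ⟨hty, hit⟩, ?_⟩
        rw [hQ'eq _ hty]
        exact Finset.mem_filter.2 ⟨Finset.mem_univ _, ⟨i, hit⟩, rfl⟩
    refine ⟨fun p a => (Q' ((σm m).symm p)).inf' (hQ' _) a,
      fun p => MC_sub_SClone _ ⟨Q' ((σm m).symm p), hQ' _, rfl⟩, ?_⟩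
    funext a
    show g _ = g _
    congr 1
    funext i
    rw [dif_pos (hne i)]
    calc (B i).inf' (hB i) a
        = ((𝒯.filter (fun t => i ∈ t)).biUnion Q').inf'
            ((hne i).biUnion fun b _ => hQ' b) a :=
          Finset.inf'_congr (hB i) (hBiU i).symm (fun _ _ => rfl)
      _ = (𝒯.filter (fun t => i ∈ t)).inf' (hne i)
            (fun t => (Q' t).inf' (hQ' t) a) := Finset.inf'_biUnion (f := a) (hne i) hQ'
      _ = (𝒯.filter (fun t => i ∈ t)).inf' (hne i)
            (fun t => (Q' ((σm m).symm (σm m t))).inf' (hQ' _) a) :=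
          Finset.inf'_congr (hne i) rfl (fun t _ => by rw [Equiv.symm_apply_apply])
  · -- Pack g 𝒯 is a minor of Comp g meets
    refine ⟨fun j x => x (σm m (type j)), fun j => proj_mem_SClone _ _, ?_⟩
    funext x
    show g _ = g _
    congr 1
    funext i
    rw [dif_pos (hne i)]
    calc (𝒯.filter (fun t => i ∈ t)).inf' (hne i) (fun t => x (σm m t))
        = ((B i).image type).inf' ((hTi i) ▸ hne i) (fun t => x (σm m t)) :=
          Finset.inf'_congr (hne i) (hTi i) (fun _ _ => rfl)
      _ = (B i).inf' (hB i) (fun j => x (σm m (type j))) := by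
          rw [Finset.inf'_image]
          rfl

lemma minor_symm_of_nullary {n m : ℕ} (hn : n = 0) (hm : m = 0)
    {f : (Fin n → A) → A} {g : (Fin m → A) → A}
    (hfg : Minor (SClone A) f g) : Minor (SClone A) g f := by
  subst hn; subst hm
  have h := minor_nullary_eq hfg
  subst h
  exact minor_refl f

lemma exists_canonical {m n : ℕ} (hm : m ≠ 0) {g : (Fin m → A) → A} {f : (Fin n → A) → A}
    (hfg : Minor (SClone A) f g) :
    ∃ 𝒯 : Finset (Finset (Fin m)), Adm 𝒯 ∧ CEquiv (SClone A) f (Pack g 𝒯) := by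
  have hn : n ≠ 0 := arity_pos_of_minor hm hfg
  obtain ⟨h, hh, rfl⟩ := hfg
  choose B hB hBe using fun i => SClone_sub_MC n (hh i)
  rw [show h = (fun i a => (B i).inf' (hB i) a) from funext hBe]
  exact canonical hn g B hB

end Aux

/-- The `S`-minor partial order on `S`-equivalence classes satisfies the
descending chain condition: every descending chain of operations is eventually
constant up to `S`-equivalence. -/
theorem stmt12 {A : Type*} [Nonempty A] [SemilatticeInf A]
    (F : ℕ → Σ n, (Fin n → A) → A)
    (hdesc : ∀ k, Minor (SClone A) (F (k + 1)).2 (F k).2) :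
    ∃ N : ℕ, ∀ k ≥ N, CEquiv (SClone A) (F k).2 (F (k + 1)).2 := by
  classical
  by_cases hm : (F 0).1 = 0
  · -- degenerate case: the first operation is nullary
    by_cases hall : ∀ k, (F k).1 = 0
    · exact ⟨0, fun k _ =>
        ⟨minor_symm_of_nullary (hall (k + 1)) (hall k) (hdesc k), hdesc k⟩⟩
    · push_neg at hall
      have hex : ∃ k, (F k).1 ≠ 0 := hall
      set k₀ := Nat.find hex with hk₀def
      have hk₀ : (F k₀).1 ≠ 0 := Nat.find_spec hex
      have hk₀pos : k₀ ≠ 0 := by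
        intro h
        exact hk₀ (h ▸ hm)
      obtain ⟨k₁, hk₁⟩ : ∃ k₁, k₀ = k₁ + 1 := ⟨k₀ - 1, by omega⟩
      have hk₁0 : (F k₁).1 = 0 := by
        by_contra hcon
        have hn_aux : (F k₁).1 ≠ 0 := hcon
        have : Nat.find hex ≤ k₁ := Nat.find_le (h := hex) hn_aux
        rw [← hk₀def] at this
        omega
      have base : ∀ a b, (F k₀).2 a = (F k₀).2 b := by
        have := hdesc k₁
        rw [← hk₁] at this
        exact const_of_minor_nullary hk₁0 this
      have key : ∀ j, (F (k₀ + j)).1 ≠ 0 ∧ ∀ a b, (F (k₀ + j)).2 a = (F (k₀ + j)).2 b := by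
        intro j
        induction j with
        | zero => exact ⟨hk₀, base⟩
        | succ j ih =>
          have hmin := hdesc (k₀ + j)
          refine ⟨arity_pos_of_minor ih.1 hmin, ?_⟩
          have cross := const_cross_of_minor ih.2 hmin
          intro a b
          exact (cross a (fun _ => Classical.arbitrary A)).trans
            (cross b (fun _ => Classical.arbitrary A)).symm
      refine ⟨k₀, fun k hk => ?_⟩
      obtain ⟨j, rfl⟩ := Nat.exists_eq_add_of_le hk
      have cross := const_cross_of_minor (key j).2 (hdesc (k₀ + j))
      exact ⟨minor_of_const_cross (key j).1 (fun a b => (cross b a).symm), hdesc _⟩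
  · -- main case
    have hmin0 : ∀ k, Minor (SClone A) (F k).2 (F 0).2 := by
      intro k
      induction k with
      | zero => exact minor_refl _
      | succ k ih => exact minor_trans (hdesc k) ih
    have hcan : ∀ k, ∃ 𝒯 : Finset (Finset (Fin (F 0).1)), Adm 𝒯 ∧
        CEquiv (SClone A) (F k).2 (Pack (F 0).2 𝒯) :=
      fun k => exists_canonical hm (hmin0 k)
    choose 𝒯 hAdm hEq using hcan
    set S : ℕ → Finset (Finset (Finset (Fin (F 0).1))) := fun k =>
      Finset.univ.filter (fun T => Adm T ∧ Minor (SClone A) (Pack (F 0).2 T) (F k).2)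
      with hSdef
    have hTS : ∀ k, 𝒯 k ∈ S k := fun k =>
      Finset.mem_filter.2 ⟨Finset.mem_univ _, hAdm k, (hEq k).2⟩
    have hSdec : ∀ k, S (k + 1) ⊆ S k := by
      intro k T hT
      obtain ⟨-, hA, hMin⟩ := Finset.mem_filter.1 hT
      exact Finset.mem_filter.2 ⟨Finset.mem_univ _, hA, minor_trans hMin (hdesc k)⟩
    have hmono : ∀ j k, j ≤ k → S k ⊆ S j := by
      intro j k hjk
      induction k with
      | zero => rw [Nat.le_zero.1 hjk]
      | succ k ih =>
        rcases Nat.lt_or_ge j (k + 1) with h | h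
        · exact (hSdec k).trans (ih (by omega))
        · rw [Nat.le_antisymm hjk h]
    have hrange : (Set.range fun k => (S k).card).Nonempty := ⟨(S 0).card, 0, rfl⟩
    obtain ⟨N, hN⟩ := Nat.sInf_mem hrange
    have hcard : ∀ k, N ≤ k → (S k).card = sInf (Set.range fun k => (S k).card) := by
      intro k hk
      refine le_antisymm ?_ (Nat.sInf_le ⟨k, rfl⟩)
      calc (S k).card ≤ (S N).card := Finset.card_le_card (hmono N k hk)
        _ = _ := hN
    refine ⟨N, fun k hk => ?_⟩
    have hSeq : S (k + 1) = S k :=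
      Finset.eq_of_subset_of_card_le (hSdec k)
        (by rw [hcard k hk, hcard (k + 1) (by omega)])
    have h𝒯k : 𝒯 k ∈ S (k + 1) := hSeq ▸ hTS k
    obtain ⟨-, -, hMin⟩ := Finset.mem_filter.1 h𝒯k
    exact ⟨minor_trans (hEq k).1 hMin, hdesc k⟩
end

section
/- Let (A; ∧) be a semilattice with an identity element 1 (satisfying x ∧ 1 = x) and a zero element 0 (satisfying x ∧ 0 = 0). Let C be any clone on A with ⟨∧⟩ ⊆ C ⊆ ⟨∧, 0, 1⟩, where 0 and 1 are regarded as constant operations. Then the partial order induced by the C-minor relation on the C-equivalence classes of operations on A satisfies the descending chain condition. -/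
variable {A : Type*}

/-- The family consisting of the meet operation together with the (unary)
constant operations with values `⊥` (zero) and `⊤` (identity). -/
def meetFam01 (A : Type*) [SemilatticeInf A] [OrderTop A] [OrderBot A] :
    ∀ n, Set ((Fin n → A) → A)
  | 1 => {fun _ => (⊥ : A), fun _ => (⊤ : A)}
  | 2 => {fun a => a 0 ⊓ a 1}
  | _ => ∅

/-- The clone generated by `⊓`, `0` and `1`. -/
def SClone01 (A : Type*) [SemilatticeInf A] [OrderTop A] [OrderBot A] :
    ∀ n, Set ((Fin n → A) → A) :=
  CloneGen (meetFam01 A)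

section AuxTm
open OrderDual

open OrderDual

abbrev Tm (n : ℕ) := WithBot ((Finset (Fin n))ᵒᵈ)

variable {A : Type*} [SemilatticeInf A] [OrderTop A] [OrderBot A]

def interpT {n : ℕ} (t : Tm n) (a : Fin n → A) : A :=
  WithBot.recBotCoe ⊥ (fun S => (ofDual S).inf a) t

@[simp] lemma interpT_bot {n : ℕ} (a : Fin n → A) : interpT (⊥ : Tm n) a = ⊥ := rfl
@[simp] lemma interpT_coe {n : ℕ} (S : (Finset (Fin n))ᵒᵈ) (a : Fin n → A) :
    interpT (S : Tm n) a = (ofDual S).inf a := rfl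

def mcomp {p q : ℕ} (t : Tm p) (r : Fin p → Tm q) : Tm q :=
  WithBot.recBotCoe ⊥ (fun S => (ofDual S).inf r) t

@[simp] lemma mcomp_bot {p q : ℕ} (r : Fin p → Tm q) : mcomp (⊥ : Tm p) r = ⊥ := rfl
@[simp] lemma mcomp_coe {p q : ℕ} (S : (Finset (Fin p))ᵒᵈ) (r : Fin p → Tm q) :
    mcomp (S : Tm p) r = (ofDual S).inf r := rfl

lemma tm_top_eq {n : ℕ} : (⊤ : Tm n) = ((toDual (∅ : Finset (Fin n)) : (Finset (Fin n))ᵒᵈ) : Tm n) := rfl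

lemma mcomp_top {p q : ℕ} (r : Fin p → Tm q) : mcomp (⊤ : Tm p) r = ⊤ := by
  rw [tm_top_eq, mcomp_coe]; simp

lemma mcomp_inf {p q : ℕ} (t u : Tm p) (r : Fin p → Tm q) :
    mcomp (t ⊓ u) r = mcomp t r ⊓ mcomp u r := by
  induction t using WithBot.recBotCoe with
  | bot => simp
  | coe S =>
    induction u using WithBot.recBotCoe with
    | bot => simp
    | coe U =>
      rw [← WithBot.coe_inf, mcomp_coe, mcomp_coe, mcomp_coe]
      have : ofDual (S ⊓ U) = ofDual S ∪ ofDual U := rfl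
      rw [this, Finset.inf_union]

def mcompHom {p q : ℕ} (r : Fin p → Tm q) : InfTopHom (Tm p) (Tm q) :=
  ⟨⟨fun t => mcomp t r, fun t u => mcomp_inf t u r⟩, mcomp_top r⟩

lemma mcomp_finset_inf {m p q : ℕ} (G : Finset (Fin m)) (t : Fin m → Tm p) (r : Fin p → Tm q) :
    mcomp (G.inf t) r = G.inf (fun j => mcomp (t j) r) :=
  map_finset_inf (mcompHom r) G t

lemma mcomp_mono {p q : ℕ} {t u : Tm p} (r : Fin p → Tm q) (h : t ≤ u) :
    mcomp t r ≤ mcomp u r := by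
  have : t ⊓ u = t := inf_eq_left.mpr h
  calc mcomp t r = mcomp (t ⊓ u) r := by rw [this]
  _ = mcomp t r ⊓ mcomp u r := mcomp_inf t u r
  _ ≤ mcomp u r := inf_le_right

lemma interpT_inf {n : ℕ} (t u : Tm n) (a : Fin n → A) :
    interpT (t ⊓ u) a = interpT t a ⊓ interpT u a := by
  induction t using WithBot.recBotCoe with
  | bot => simp
  | coe S =>
    induction u using WithBot.recBotCoe with
    | bot => simp
    | coe U =>
      rw [← WithBot.coe_inf, interpT_coe, interpT_coe, interpT_coe]
      have : ofDual (S ⊓ U) = ofDual S ∪ ofDual U := rfl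
      rw [this, Finset.inf_union]

lemma interpT_top {n : ℕ} (a : Fin n → A) : interpT (⊤ : Tm n) a = ⊤ := by
  rw [tm_top_eq, interpT_coe]; simp

def interpHom {n : ℕ} (a : Fin n → A) : InfTopHom (Tm n) A :=
  ⟨⟨fun t => interpT t a, fun t u => interpT_inf t u a⟩, interpT_top a⟩

lemma interpT_finset_inf {m n : ℕ} (G : Finset (Fin m)) (t : Fin m → Tm n) (a : Fin n → A) :
    interpT (G.inf t) a = G.inf (fun j => interpT (t j) a) :=
  map_finset_inf (interpHom a) G t

lemma interp_mcomp {p q : ℕ} (t : Tm p) (r : Fin p → Tm q) (a : Fin q → A) :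
    interpT (mcomp t r) a = interpT t (fun i => interpT (r i) a) := by
  induction t using WithBot.recBotCoe with
  | bot => rfl
  | coe S => rw [mcomp_coe, interpT_coe, interpT_finset_inf]

-- coe of finset inf
lemma coe_inf_eq {m p : ℕ} {G : Finset (Fin m)} {t : Fin m → Tm p} {u : Fin m → Finset (Fin p)}
    (h : ∀ j ∈ G, t j = ((toDual (u j) : (Finset (Fin p))ᵒᵈ) : Tm p)) :
    G.inf t = ((toDual (G.sup u) : (Finset (Fin p))ᵒᵈ) : Tm p) := by
  induction G using Finset.cons_induction with
  | empty => simp [tm_top_eq]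
  | cons a s ha ih =>
    rw [Finset.inf_cons, Finset.sup_cons, h a (Finset.mem_cons_self a s),
      ih (fun j hj => h j (Finset.mem_cons_of_mem hj)), ← WithBot.coe_inf]
    rfl

lemma mem_finset_inf {ι : Type*} {p : ℕ} {s : Finset ι} {f : ι → Finset (Fin p)} {x : Fin p} :
    x ∈ s.inf f ↔ ∀ i ∈ s, x ∈ f i := by
  induction s using Finset.cons_induction with
  | empty => simp
  | cons a s ha ih => simp [Finset.inf_cons, ih]

lemma finset_mono_stab {X : Type*} [Fintype X] [DecidableEq X] (s : ℕ → Finset X)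
    (h : ∀ k, s k ⊆ s (k + 1)) : ∃ N, ∀ k, N ≤ k → s k = s N := by
  have hmono : ∀ {a b : ℕ}, a ≤ b → s a ⊆ s b := by
    intro a b hab
    exact monotone_nat_of_le_succ (f := s) h hab
  have hbdd : BddAbove (Set.range fun k => (s k).card) := by
    refine ⟨Fintype.card X, ?_⟩
    rintro x ⟨k, rfl⟩
    exact Finset.card_le_univ _
  have hne : (Set.range fun k => (s k).card).Nonempty := ⟨(s 0).card, 0, rfl⟩
  obtain ⟨N, hN⟩ := Nat.sSup_mem hne hbdd
  refine ⟨N, fun k hk => ?_⟩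
  have h1 : s N ⊆ s k := hmono hk
  have h2 : (s k).card ≤ (s N).card := by
    exact le_of_le_of_eq (le_csSup hbdd ⟨k, rfl⟩) hN.symm
  exact (Finset.eq_of_subset_of_card_le h1 h2).symm

-- ### the "non-disjointness" invariant
def NDP {m p : ℕ} (t : Fin m → Tm p) (G : Finset (Fin m)) : Prop :=
  G = ∅ ∨ (∃ j ∈ G, t j = ⊥) ∨
    ∃ x : Fin p, ∀ j ∈ G, ∀ S : (Finset (Fin p))ᵒᵈ, t j = (S : Tm p) → x ∈ ofDual S

lemma ndp_mono {m p q : ℕ} {t : Fin m → Tm p} {r : Fin p → Tm q}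
    (hrT : ∀ i, r i ≠ ⊤) {G : Finset (Fin m)} (hG : NDP t G) :
    NDP (fun j => mcomp (t j) r) G := by
  rcases hG with hG | ⟨j, hj, hbot⟩ | ⟨x, hx⟩
  · exact Or.inl hG
  · refine Or.inr (Or.inl ⟨j, hj, ?_⟩)
    show mcomp (t j) r = ⊥
    rw [hbot]; rfl
  · by_cases hGe : G = ∅
    · exact Or.inl hGe
    · obtain ⟨j0, hj0⟩ := Finset.nonempty_iff_ne_empty.mpr hGe
      by_cases hrb : r x = ⊥
      · refine Or.inr (Or.inl ⟨j0, hj0, ?_⟩)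
        show mcomp (t j0) r = ⊥
        by_cases htb : t j0 = ⊥
        · rw [htb]; rfl
        · obtain ⟨S, hS⟩ := WithBot.ne_bot_iff_exists.mp htb
          have hxS : x ∈ ofDual S := hx j0 hj0 S hS.symm
          rw [← hS, mcomp_coe]
          exact le_bot_iff.mp (le_trans (Finset.inf_le hxS) (le_of_eq hrb))
      · obtain ⟨T, hrx⟩ := WithBot.ne_bot_iff_exists.mp hrb
        have hTne : (ofDual T).Nonempty := by
          rw [Finset.nonempty_iff_ne_empty]
          intro hemp
          apply hrT x
          rw [← hrx, tm_top_eq]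
          congr 1
        obtain ⟨y, hy⟩ := hTne
        refine Or.inr (Or.inr ⟨y, ?_⟩)
        intro j hj S' hS'
        simp only at hS'
        by_cases htb : t j = ⊥
        · rw [htb] at hS'; exact absurd hS' (by simp)
        · obtain ⟨S, hS⟩ := WithBot.ne_bot_iff_exists.mp htb
          have hxS : x ∈ ofDual S := hx j hj S hS.symm
          rw [← hS, mcomp_coe] at hS'
          have h1 : (ofDual S).inf r ≤ r x := Finset.inf_le hxS
          rw [hS', ← hrx, WithBot.coe_le_coe] at h1
          have h2 : ofDual T ⊆ ofDual S' := h1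
          exact h2 hy

lemma reverse_core {m p q : ℕ} (hp : 0 < p) (t : Fin m → Tm p) (r : Fin p → Tm q)
    (t' : Fin m → Tm q) (ht' : ∀ j, t' j = mcomp (t j) r)
    (hA : ∀ (j : Fin m) (G : Finset (Fin m)), G.inf t' ≤ t' j → G.inf t ≤ t j)
    (hZ : ∀ j, t' j = ⊥ → t j = ⊥) :
    ∃ Q : Fin q → Finset (Fin p),
      (∀ i, (Q i).Nonempty ∨ ∃ G : Finset (Fin m), NDP t' G ∧ ¬ NDP t G) ∧
      (∀ (j : Fin m) (S : (Finset (Fin p))ᵒᵈ) (S' : (Finset (Fin q))ᵒᵈ),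
        t j = (S : Tm p) → t' j = (S' : Tm q) →
        (ofDual S').biUnion Q = ofDual S) := by
  classical
  -- auxiliary: t j is not ⊥ iff t' j is not ⊥
  have hZ' : ∀ j, t j = ⊥ → t' j = ⊥ := by
    intro j h; rw [ht' j, h]; rfl
  -- the set of columns of t' whose set contains i
  set J : Fin q → Finset (Fin m) :=
    fun i => Finset.univ.filter (fun j => ∃ S' : (Finset (Fin q))ᵒᵈ, t' j = (S' : Tm q) ∧ i ∈ ofDual S') with hJ
  -- underlying sets of the columns
  set sOf : Fin m → Finset (Fin p) := fun j => ofDual ((t j).unbotD ⊥) with hsOf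
  have hsOf_eq : ∀ (j : Fin m) (S : (Finset (Fin p))ᵒᵈ), t j = (S : Tm p) → sOf j = ofDual S := by
    intro j S hS; rw [hsOf]; simp only [hS, WithBot.unbotD_coe]
  set sOf' : Fin m → Finset (Fin q) := fun j => ofDual ((t' j).unbotD ⊥) with hsOf'
  have hsOf'_eq : ∀ (j : Fin m) (S' : (Finset (Fin q))ᵒᵈ), t' j = (S' : Tm q) → sOf' j = ofDual S' := by
    intro j S' hS'; rw [hsOf']; simp only [hS', WithBot.unbotD_coe]
  set Q : Fin q → Finset (Fin p) :=
    fun i => if (J i).Nonempty then (J i).inf sOf else {⟨0, hp⟩} with hQ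
  have hmemJ : ∀ (i : Fin q) (j : Fin m), j ∈ J i ↔
      ∃ S' : (Finset (Fin q))ᵒᵈ, t' j = (S' : Tm q) ∧ i ∈ ofDual S' := by
    intro i j; rw [hJ]; simp
  refine ⟨Q, ?_, ?_⟩
  · -- realizability
    intro i
    by_cases hJi : (J i).Nonempty
    · by_cases hQi : (Q i).Nonempty
      · exact Or.inl hQi
      · refine Or.inr ⟨J i, ?_, ?_⟩
        · -- NDP t' (J i) via witness i
          refine Or.inr (Or.inr ⟨i, ?_⟩)
          intro j hj S' hS'
          obtain ⟨S'', hS'', hiS''⟩ := (hmemJ i j).mp hj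
          have : S'' = S' := by
            rw [hS''] at hS'; exact WithBot.coe_inj.mp hS'
          rwa [this] at hiS''
        · -- ¬ NDP t (J i)
          intro hnd
          rcases hnd with hnd | ⟨j, hj, hbot⟩ | ⟨x, hx⟩
          · rw [hnd] at hJi; exact absurd hJi (by simp)
          · obtain ⟨S'', hS'', _⟩ := (hmemJ i j).mp hj
            rw [hZ' j hbot] at hS''
            exact absurd hS''.symm (by simp)
          · apply hQi
            refine ⟨x, ?_⟩
            rw [hQ]; simp only [if_pos hJi]
            rw [mem_finset_inf]
            intro j hj
            obtain ⟨S'', hS'', _⟩ := (hmemJ i j).mp hj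
            have htb : t j ≠ ⊥ := by
              intro h; rw [hZ' j h] at hS''; exact absurd hS''.symm (by simp)
            obtain ⟨S, hS⟩ := WithBot.ne_bot_iff_exists.mp htb
            rw [hsOf_eq j S hS.symm]
            exact hx j hj S hS.symm
    · refine Or.inl ?_
      rw [hQ]; simp only [if_neg hJi]
      exact Finset.singleton_nonempty _
  · -- covering property
    intro j S S' hS hS'
    apply Finset.Subset.antisymm
    · -- ⊆
      intro x hx
      obtain ⟨i, hiS', hxQ⟩ := Finset.mem_biUnion.mp hx
      have hjJ : j ∈ J i := (hmemJ i j).mpr ⟨S', hS', hiS'⟩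
      have hJi : (J i).Nonempty := ⟨j, hjJ⟩
      rw [hQ] at hxQ; simp only [if_pos hJi] at hxQ
      have hsub : (J i).inf sOf ⊆ sOf j := Finset.inf_le hjJ
      have := hsub hxQ
      rwa [hsOf_eq j S hS] at this
    · -- ⊇
      intro x hx
      set G : Finset (Fin m) :=
        Finset.univ.filter (fun j' => ∃ S₂ : (Finset (Fin p))ᵒᵈ, t j' = (S₂ : Tm p) ∧ x ∉ ofDual S₂) with hG
      have hmemG : ∀ j' : Fin m, j' ∈ G ↔
          ∃ S₂ : (Finset (Fin p))ᵒᵈ, t j' = (S₂ : Tm p) ∧ x ∉ ofDual S₂ := by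
        intro j'; rw [hG]; simp
      -- every member of G has proper t and t' columns
      have hGt : ∀ j' ∈ G, t j' = ((toDual (sOf j') : (Finset (Fin p))ᵒᵈ) : Tm p) := by
        intro j' hj'
        obtain ⟨S₂, hS₂, _⟩ := (hmemG j').mp hj'
        rw [hS₂, hsOf_eq j' S₂ hS₂]
        rfl
      have hGt' : ∀ j' ∈ G, t' j' = ((toDual (sOf' j') : (Finset (Fin q))ᵒᵈ) : Tm q) := by
        intro j' hj'
        have htb : t' j' ≠ ⊥ := by
          intro h
          obtain ⟨S₂, hS₂, _⟩ := (hmemG j').mp hj'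
          rw [hZ j' h] at hS₂
          exact absurd hS₂.symm (by simp)
        obtain ⟨S₂', hS₂'⟩ := WithBot.ne_bot_iff_exists.mp htb
        rw [← hS₂', hsOf'_eq j' S₂' hS₂'.symm]
        rfl
      -- the key negation
      have hnot : ¬ (G.inf t' ≤ t' j) := by
        intro hle
        have h2 := hA j G hle
        rw [coe_inf_eq hGt, hS, WithBot.coe_le_coe] at h2
        have h3 : ofDual S ⊆ G.sup sOf := h2
        obtain ⟨j', hj', hxs⟩ := Finset.mem_sup.mp (h3 hx)
        obtain ⟨S₂, hS₂, hxn⟩ := (hmemG j').mp hj'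
        rw [hsOf_eq j' S₂ hS₂] at hxs
        exact hxn hxs
      -- extract a witness i
      rw [coe_inf_eq hGt', hS', WithBot.coe_le_coe] at hnot
      have hnot2 : ¬ (ofDual S' ⊆ G.sup sOf') := hnot
      obtain ⟨i, hiS', hins⟩ := Finset.not_subset.mp hnot2
      have hjJ : j ∈ J i := (hmemJ i j).mpr ⟨S', hS', hiS'⟩
      have hJi : (J i).Nonempty := ⟨j, hjJ⟩
      refine Finset.mem_biUnion.mpr ⟨i, hiS', ?_⟩
      rw [hQ]; simp only [if_pos hJi]
      rw [mem_finset_inf]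
      intro j'' hj''
      obtain ⟨S'₂, hS'₂, hiS'₂⟩ := (hmemJ i j'').mp hj''
      -- j'' is not in G
      have hj''G : j'' ∉ G := by
        intro hin
        apply hins
        refine Finset.mem_sup.mpr ⟨j'', hin, ?_⟩
        rw [hsOf'_eq j'' S'₂ hS'₂]
        exact hiS'₂
      -- t j'' is proper and contains x
      have htb : t j'' ≠ ⊥ := by
        intro h; rw [hZ' j'' h] at hS'₂; exact absurd hS'₂.symm (by simp)
      obtain ⟨S₂, hS₂⟩ := WithBot.ne_bot_iff_exists.mp htb
      rw [hsOf_eq j'' S₂ hS₂.symm]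
      by_contra hxn
      exact hj''G ((hmemG j'').mpr ⟨S₂, hS₂.symm, hxn⟩)

end AuxTm

set_option linter.unusedSectionVars false
-- ### clone lemmas
section CloneLemmas
variable [SemilatticeInf A] [OrderTop A] [OrderBot A]

lemma inf_mem_sclone {n : ℕ} {S : Finset (Fin n)} (hS : S.Nonempty) :
    (fun a : Fin n → A => S.inf a) ∈ SClone A n := by
  intro D hD hsub
  have hmeet : (fun a : Fin 2 → A => a 0 ⊓ a 1) ∈ D 2 := hsub 2 rfl
  induction hS using Finset.Nonempty.cons_induction with
  | singleton i =>
    have : (fun a : Fin n → A => ({i} : Finset (Fin n)).inf a) = fun a : Fin n → A => a i := by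
      funext a; simp
    rw [this]; exact hD.1 n i
  | cons i s hi hs ih =>
    have hcomp := hD.2 2 n (fun a => a 0 ⊓ a 1)
      ![fun a : Fin n → A => a i, fun a : Fin n → A => s.inf a] hmeet ?_
    · have : Comp (fun a : Fin 2 → A => a 0 ⊓ a 1)
          ![fun a : Fin n → A => a i, fun a : Fin n → A => s.inf a]
          = fun a : Fin n → A => (Finset.cons i s hi).inf a := by
        funext a; simp [Comp, Finset.inf_cons]
      rwa [this] at hcomp
    · intro k
      fin_cases k
      · exact hD.1 n i
      · exact ih

def NF [SemilatticeInf A] [OrderTop A] [OrderBot A] : ∀ n, Set ((Fin n → A) → A) :=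
  fun n => {f | f = (fun _ => ⊥) ∨ ∃ S : Finset (Fin n), f = fun a => S.inf a}

lemma nf_isClone : IsClone (NF (A := A)) := by
  constructor
  · intro n i
    exact Or.inr ⟨{i}, by funext a; simp⟩
  · rintro n m f g hf hg
    rcases hf with hf | ⟨S, rfl⟩
    · left; rw [hf]; rfl
    · by_cases hb : ∃ i ∈ S, g i = fun _ => (⊥ : A)
      · left
        obtain ⟨i0, hi0, hgi⟩ := hb
        funext a
        refine le_antisymm ?_ bot_le
        calc Comp (fun a : Fin n → A => S.inf a) g a = S.inf (fun i => g i a) := rfl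
        _ ≤ g i0 a := Finset.inf_le hi0
        _ = ⊥ := by rw [hgi]
      · right
        push_neg at hb
        have hT : ∀ i, ∃ T : Finset (Fin m), i ∈ S → g i = fun a => T.inf a := by
          intro i
          by_cases hi : i ∈ S
          · rcases hg i with h1 | ⟨T, hT⟩
            · exact absurd h1 (hb i hi)
            · exact ⟨T, fun _ => hT⟩
          · exact ⟨∅, fun h => absurd h hi⟩
        choose T hT using hT
        refine ⟨S.biUnion T, ?_⟩
        funext a
        show S.inf (fun i => g i a) = (S.biUnion T).inf a
        rw [Finset.inf_biUnion]
        exact Finset.inf_congr rfl (fun i hi => by rw [hT i hi])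

lemma mem_nf {n : ℕ} {f : (Fin n → A) → A} (h : f ∈ SClone01 A n) :
    f = (fun _ => ⊥) ∨ ∃ S : Finset (Fin n), f = fun a => S.inf a := by
  refine h NF nf_isClone ?_
  intro k
  match k with
  | 0 => exact fun f hf => absurd hf (by simp [meetFam01])
  | 1 =>
    rintro f hf
    rcases hf with hf | hf
    · exact Or.inl hf
    · refine Or.inr ⟨∅, ?_⟩
      simp only [Set.mem_singleton_iff] at hf
      rw [hf]; funext a; simp
  | 2 =>
    rintro f hf
    simp only [meetFam01, Set.mem_singleton_iff] at hf
    refine Or.inr ⟨{0, 1}, ?_⟩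
    rw [hf]; funext a
    simp [Finset.inf_insert]
  | (k+3) => exact fun f hf => absurd hf (by simp [meetFam01])

variable (C : ∀ n, Set ((Fin n → A) → A))

lemma const_to_one (hC : IsClone C) {c : A} {n : ℕ} (h : (fun _ : Fin n → A => c) ∈ C n) :
    (fun _ : Fin 1 → A => c) ∈ C 1 := by
  match n with
  | 0 => exact hC.2 0 1 (fun _ => c) Fin.elim0 h (fun i => i.elim0)
  | (n'+1) =>
    exact hC.2 (n'+1) 1 (fun _ => c) (fun _ => fun a => a 0) h (fun _ => hC.1 1 0)

lemma const_of_one (hC : IsClone C) {c : A} {p : ℕ} (hp : 0 < p) (h : (fun _ : Fin 1 → A => c) ∈ C 1) :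
    (fun _ : Fin p → A => c) ∈ C p :=
  hC.2 1 p (fun _ => c) (fun _ => fun a => a ⟨0, hp⟩) h (fun _ => hC.1 p ⟨0, hp⟩)

end CloneLemmas


section Main
open OrderDual

variable [Nonempty A] [SemilatticeInf A] [OrderTop A] [OrderBot A]

lemma minor_intro {n m' : ℕ} (C : ∀ n, Set ((Fin n → A) → A))
    {f : (Fin n → A) → A} {g : (Fin m' → A) → A}
    (h : Fin m' → (Fin n → A) → A) (hmem : ∀ i, h i ∈ C n) (heq : f = Comp g h) :
    Minor C f g := ⟨h, hmem, heq⟩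

/-- For any clone `C` with `⟨∧⟩ ⊆ C ⊆ ⟨∧, 0, 1⟩`, the `C`-minor partial order
on `C`-equivalence classes satisfies the descending chain condition. -/
theorem stmt13 {A : Type*} [Nonempty A] [SemilatticeInf A] [OrderTop A] [OrderBot A]
    (C : ∀ n, Set ((Fin n → A) → A)) (hC : IsClone C)
    (hS : ∀ n, SClone A n ⊆ C n) (hS01 : ∀ n, C n ⊆ SClone01 A n)
    (F : ℕ → Σ n, (Fin n → A) → A)
    (hdesc : ∀ k, Minor C (F (k + 1)).2 (F k).2) :
    ∃ N : ℕ, ∀ k ≥ N, CEquiv C (F k).2 (F (k + 1)).2 := by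
  classical
  by_cases hall : ∀ k, (F k).1 = 0
  · refine ⟨0, fun k _ => ?_⟩
    have hd : ∃ h : Fin ((F k).1) → (Fin ((F (k+1)).1) → A) → A,
        (∀ i, h i ∈ C ((F (k+1)).1)) ∧ (F (k+1)).2 = Comp (F k).2 h := hdesc k
    obtain ⟨h', hh'C, heq⟩ := hd
    refine ⟨?_, hdesc k⟩
    have e1 : (F (k+1)).1 = 0 := hall (k+1)
    refine minor_intro C
      (fun i => @Fin.elim0 ((Fin ((F k).1) → A) → A) (Fin.cast e1 i))
      (fun i => (Fin.cast e1 i).elim0) ?_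
    funext a
    show (F k).2 a = (F (k+1)).2
      (fun i => @Fin.elim0 ((Fin ((F k).1) → A) → A) (Fin.cast e1 i) a)
    rw [heq]
    show (F k).2 a = (F k).2
      (fun j => h' j (fun i => @Fin.elim0 ((Fin ((F k).1) → A) → A) (Fin.cast e1 i) a))
    refine congrArg (F k).2 (funext fun j => ?_)
    exact (Fin.cast (hall k) j).elim0
  · push_neg at hall
    obtain ⟨K, hK⟩ := hall
    have hdesc' : ∀ k, ∃ h : Fin ((F (K + k)).1) → (Fin ((F (K + k + 1)).1) → A) → A,
        (∀ i, h i ∈ C ((F (K + k + 1)).1)) ∧ (F (K + k + 1)).2 = Comp (F (K + k)).2 h :=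
      fun k => hdesc (K + k)
    choose hh hhC hhEq using hdesc'
    -- representations of the substitution functions
    have hrep0 : ∀ k (i : Fin ((F (K + k)).1)), ∃ tt : Tm ((F (K + k + 1)).1),
        hh k i = interpT tt := by
      intro k i
      rcases mem_nf (hS01 _ (hhC k i)) with h1 | ⟨S, h2⟩
      · exact ⟨⊥, by rw [h1]; funext a; rfl⟩
      · refine ⟨((toDual S : (Finset (Fin ((F (K + k + 1)).1)))ᵒᵈ) : Tm _), ?_⟩
        rw [h2]; funext a; rw [interpT_coe]; rfl
    choose rep hrepEq using hrep0
    have hrepTop : ∀ k i, rep k i = ⊤ → ((fun _ : Fin 1 → A => (⊤ : A)) ∈ C 1) := by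
      intro k i h
      have h2 : hh k i = fun _ => (⊤ : A) := by
        rw [hrepEq k i, h]; funext a; exact interpT_top a
      exact const_to_one C hC (h2 ▸ hhC k i)
    -- the matrix sequence
    let t : ∀ k : ℕ, Fin ((F K).1) → Tm ((F (K + k)).1) :=
      fun k => Nat.rec (motive := fun k => Fin ((F K).1) → Tm ((F (K + k)).1))
        (fun j => ((toDual ({j} : Finset (Fin ((F K).1))) : (Finset (Fin ((F K).1)))ᵒᵈ) :
          Tm ((F K).1)))
        (fun k' tk j => mcomp (tk j) (rep k')) k
    have ht0 : ∀ j, t 0 j = ((toDual ({j} : Finset (Fin ((F K).1))) :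
        (Finset (Fin ((F K).1)))ᵒᵈ) : Tm ((F K).1)) := fun j => rfl
    have htS : ∀ k j, t (k+1) j = mcomp (t k j) (rep k) := fun k j => rfl
    -- interpretation property
    have hinterp : ∀ k, (F (K + k)).2 = fun a => (F K).2 (fun j => interpT (t k j) a) := by
      intro k
      induction k with
      | zero =>
        funext a
        show (F K).2 a = (F K).2 (fun j => interpT (t 0 j) a)
        refine congrArg (F K).2 (funext fun j => ?_)
        rw [ht0 j, interpT_coe]
        show a j = ({j} : Finset (Fin ((F K).1))).inf a
        exact Finset.inf_singleton.symm
      | succ k ih =>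
        show (F (K + k + 1)).2 = fun a => (F K).2 (fun j => interpT (t (k+1) j) a)
        rw [hhEq k]
        funext a
        show (F (K + k)).2 (fun i => hh k i a) = _
        rw [ih]
        show (F K).2 (fun j => interpT (t k j) (fun i => hh k i a)) =
          (F K).2 (fun j => interpT (t (k+1) j) a)
        refine congrArg (F K).2 (funext fun j => ?_)
        calc interpT (t k j) (fun i => hh k i a)
            = interpT (t k j) (fun i => interpT (rep k i) a) := by
              congr 1; funext i; rw [hrepEq k i]
          _ = interpT (mcomp (t k j) (rep k)) a := (interp_mcomp _ _ _).symm
          _ = interpT (t (k+1) j) a := by rw [htS k j]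
    -- invariants
    let invA : ℕ → Finset (Fin ((F K).1) × Finset (Fin ((F K).1))) :=
      fun k => Finset.univ.filter (fun x => x.2.inf (t k) ≤ t k x.1)
    let invZ : ℕ → Finset (Fin ((F K).1)) :=
      fun k => Finset.univ.filter (fun j => t k j = ⊥)
    let invD : ℕ → Finset (Finset (Fin ((F K).1))) :=
      fun k => Finset.univ.filter
        (fun G => ¬ ((fun _ : Fin 1 → A => (⊤ : A)) ∈ C 1) ∧ NDP (t k) G)
    have hA_mono : ∀ k, invA k ⊆ invA (k+1) := by
      intro k x hx
      refine Finset.mem_filter.mpr ⟨Finset.mem_univ _, ?_⟩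
      have h2 := (Finset.mem_filter.mp hx).2
      calc x.2.inf (t (k+1)) = x.2.inf (fun j => mcomp (t k j) (rep k)) := rfl
        _ = mcomp (x.2.inf (t k)) (rep k) := (mcomp_finset_inf _ _ _).symm
        _ ≤ mcomp (t k x.1) (rep k) := mcomp_mono _ h2
        _ = t (k+1) x.1 := rfl
    have hZ_mono : ∀ k, invZ k ⊆ invZ (k+1) := by
      intro k j hj
      refine Finset.mem_filter.mpr ⟨Finset.mem_univ _, ?_⟩
      have h2 := (Finset.mem_filter.mp hj).2
      show mcomp (t k j) (rep k) = ⊥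
      rw [h2]; rfl
    have hD_mono : ∀ k, invD k ⊆ invD (k+1) := by
      intro k G hG
      obtain ⟨-, hnT, hnd⟩ := Finset.mem_filter.mp hG
      refine Finset.mem_filter.mpr ⟨Finset.mem_univ _, hnT, ?_⟩
      exact ndp_mono (fun i hi => hnT (hrepTop k i hi)) hnd
    obtain ⟨NA, hNA⟩ := finset_mono_stab invA hA_mono
    obtain ⟨NZ, hNZ⟩ := finset_mono_stab invZ hZ_mono
    obtain ⟨ND, hND⟩ := finset_mono_stab invD hD_mono
    set N := max NA (max NZ ND) with hNdef
    -- the reversal at each stable step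
    have key : ∀ k, N ≤ k → Minor C (F (K + k)).2 (F (K + k + 1)).2 := by
      intro k hk
      have eA : invA (k+1) = invA k := by
        rw [hNA (k+1) (by omega), hNA k (by omega)]
      have eZ : invZ (k+1) = invZ k := by
        rw [hNZ (k+1) (by omega), hNZ k (by omega)]
      have eD : invD (k+1) = invD k := by
        rw [hND (k+1) (by omega), hND k (by omega)]
      have stabA : ∀ (j : Fin ((F K).1)) (G : Finset (Fin ((F K).1))),
          G.inf (t (k+1)) ≤ t (k+1) j → G.inf (t k) ≤ t k j := by
        intro j G h
        have h1 : ((j, G) : Fin ((F K).1) × Finset (Fin ((F K).1))) ∈ invA (k+1) :=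
          Finset.mem_filter.mpr ⟨Finset.mem_univ _, h⟩
        rw [eA] at h1
        exact (Finset.mem_filter.mp h1).2
      have stabZ : ∀ j, t (k+1) j = ⊥ → t k j = ⊥ := by
        intro j h
        have h1 : j ∈ invZ (k+1) := Finset.mem_filter.mpr ⟨Finset.mem_univ _, h⟩
        rw [eZ] at h1
        exact (Finset.mem_filter.mp h1).2
      have hinterp' : (F (K + k + 1)).2 = fun a => (F K).2 (fun j => interpT (t (k+1) j) a) :=
        hinterp (k+1)
      by_cases hp0 : (F (K + k)).1 = 0
      · -- the nullary case: all columns are constants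
        haveI hIE : IsEmpty (Fin ((F (K + k)).1)) := by rw [hp0]; infer_instance
        have hc0 : ∀ k', (F (K + k')).1 = 0 → ∃ g, g ∈ C 0 := by
          intro k'
          induction k' with
          | zero => intro h; exact absurd h hK
          | succ k'' ih =>
            intro h
            by_cases h2 : (F (K + k'')).1 = 0
            · exact ih h2
            · have h' : (F (K + k'' + 1)).1 = 0 := h
              have e : ∃ g, g ∈ C ((F (K + k'' + 1)).1) :=
                ⟨hh k'' ⟨0, Nat.pos_of_ne_zero h2⟩, hhC k'' ⟨0, Nat.pos_of_ne_zero h2⟩⟩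
              exact h' ▸ e
        obtain ⟨c0, hc0m⟩ := hc0 k hp0
        have hc0' : ∃ g, g ∈ C ((F (K + k)).1) := by rw [hp0]; exact ⟨c0, hc0m⟩
        obtain ⟨c0', hc0m'⟩ := hc0'
        refine minor_intro C (fun _ => c0') (fun _ => hc0m') ?_
        rw [hinterp k, hinterp']
        funext a
        show (F K).2 (fun j => interpT (t k j) a)
            = (F K).2 (fun j => interpT (t (k+1) j) (fun _ => c0' a))
        refine congrArg (F K).2 (funext fun j => ?_)
        by_cases hb : t k j = ⊥
        · have hb' : t (k+1) j = ⊥ := by rw [htS k j, hb]; rfl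
          rw [hb, hb']; rfl
        · obtain ⟨S, hSe⟩ := WithBot.ne_bot_iff_exists.mp hb
          have hSempty : ofDual S = ∅ := Finset.eq_empty_of_isEmpty _
          have hStop : S = toDual (∅ : Finset (Fin ((F (K + k)).1))) := by
            rw [← hSempty]; rfl
          have htop : t k j = ⊤ := by rw [← hSe, hStop, tm_top_eq]
          have h1 : ((j, (∅ : Finset (Fin ((F K).1)))) :
              Fin ((F K).1) × Finset (Fin ((F K).1))) ∈ invA k := by
            refine Finset.mem_filter.mpr ⟨Finset.mem_univ _, ?_⟩
            rw [Finset.inf_empty, htop]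
          rw [← eA] at h1
          have h2 := (Finset.mem_filter.mp h1).2
          rw [Finset.inf_empty] at h2
          have htop' : t (k+1) j = ⊤ := top_le_iff.mp h2
          rw [htop, htop', interpT_top, interpT_top]
      · -- the positive-arity case
        have hp : 0 < (F (K + k)).1 := Nat.pos_of_ne_zero hp0
        obtain ⟨Q, hreal, hcover⟩ :=
          reverse_core hp (t k) (rep k) (t (k+1)) (fun j => htS k j) stabA stabZ
        have hQmem : ∀ i, (fun a : Fin ((F (K + k)).1) → A => (Q i).inf a) ∈ C ((F (K + k)).1) := by
          intro i
          rcases hreal i with hne | ⟨G, hG1, hG2⟩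
          · exact hS _ (inf_mem_sclone hne)
          · have hcT : (fun _ : Fin 1 → A => (⊤ : A)) ∈ C 1 := by
              by_contra hnT
              have h1 : G ∈ invD (k+1) :=
                Finset.mem_filter.mpr ⟨Finset.mem_univ _, hnT, hG1⟩
              rw [eD] at h1
              exact hG2 (Finset.mem_filter.mp h1).2.2
            by_cases hne : (Q i).Nonempty
            · exact hS _ (inf_mem_sclone hne)
            · have hQe : Q i = ∅ := Finset.not_nonempty_iff_eq_empty.mp hne
              have h3 : (fun a : Fin ((F (K + k)).1) → A => (Q i).inf a)
                  = fun _ => (⊤ : A) := by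
                rw [hQe]; funext a; simp
              rw [h3]
              exact const_of_one C hC hp hcT
        refine minor_intro C (fun i => fun a => (Q i).inf a) hQmem ?_
        rw [hinterp k, hinterp']
        funext a
        show (F K).2 (fun j => interpT (t k j) a)
            = (F K).2 (fun j => interpT (t (k+1) j) (fun i => (Q i).inf a))
        refine congrArg (F K).2 (funext fun j => ?_)
        by_cases hb : t k j = ⊥
        · have hb' : t (k+1) j = ⊥ := by rw [htS k j, hb]; rfl
          rw [hb, hb']; rfl
        · obtain ⟨S, hSe⟩ := WithBot.ne_bot_iff_exists.mp hb
          have hb2 : t (k+1) j ≠ ⊥ := fun h => hb (stabZ j h)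
          obtain ⟨S', hS'e⟩ := WithBot.ne_bot_iff_exists.mp hb2
          have hcov := hcover j S S' hSe.symm hS'e.symm
          rw [← hSe, ← hS'e, interpT_coe, interpT_coe, ← hcov, Finset.inf_biUnion]
          rfl
    refine ⟨K + N, fun k hk => ?_⟩
    have hk' : N ≤ k - K := by omega
    have hkk : K + (k - K) = k := by omega
    refine ⟨?_, hdesc k⟩
    have h1 := key (k - K) hk'
    rw [hkk] at h1
    exact h1

end Main
end

section
/- Let C be a clone on A containing a subclone S such that every member of C \ S is a constant operation. If f: A^n → A is a nonconstant operation, then a C-decomposition f = g(h_1,...,h_m) that is minimal among C-decompositions has all h_i ∈ S; consequently deg_C f = deg_S f. -/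
variable {A : Type*}

/-- The `C`-degree of an operation: 0 for constants, otherwise the least arity of
an outer function in a `C`-decomposition. -/
noncomputable def degC (C : ∀ n, Set ((Fin n → A) → A)) {n : ℕ}
    (f : (Fin n → A) → A) : ℕ :=
  letI := Classical.dec (∃ c : A, f = fun _ => c)
  if (∃ c : A, f = fun _ => c) then 0
  else sInf {m | ∃ g : (Fin m → A) → A, Minor C f g}

/-- If `S ⊆ C` are clones such that every member of `C \ S` is constant, then a
minimal `C`-decomposition of a nonconstant `f` has all its inner functions in
`S`, and consequently `deg_C f = deg_S f`. -/
theorem stmt15 {A : Type*} [Nonempty A]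
    (C S : ∀ n, Set ((Fin n → A) → A)) (hC : IsClone C) (hS : IsClone S)
    (hSC : ∀ n, S n ⊆ C n)
    (hconst : ∀ (n : ℕ) (f : (Fin n → A) → A),
      f ∈ C n → f ∉ S n → ∃ c : A, f = fun _ => c)
    {n : ℕ} (f : (Fin n → A) → A) (hnc : ¬ ∃ c : A, f = fun _ => c) :
    (∀ (m : ℕ) (g : (Fin m → A) → A) (h : Fin m → (Fin n → A) → A),
      (∀ i, h i ∈ C n) → f = Comp g h → m = degC C f → ∀ i, h i ∈ S n) ∧
    degC C f = degC S f := by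
  classical
  set T : Set ℕ := {m | ∃ g : (Fin m → A) → A, Minor C f g} with hTdef
  set TS : Set ℕ := {m | ∃ g : (Fin m → A) → A, Minor S f g} with hTSdef
  have hdegC : degC C f = sInf T := by simp [degC, hnc]; rfl
  have hdegS : degC S f = sInf TS := by simp [degC, hnc]; rfl
  have hnTS : n ∈ TS := ⟨f, fun i a => a i, fun i => hS.1 n i, rfl⟩
  have hTS_sub_T : TS ⊆ T := by
    rintro m ⟨g, h, hh, hf⟩
    exact ⟨g, h, fun i => hSC n (hh i), hf⟩
  have hnT : n ∈ T := hTS_sub_T hnTS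
  have key : ∀ (m : ℕ) (g : (Fin m → A) → A) (h : Fin m → (Fin n → A) → A),
      (∀ i, h i ∈ C n) → f = Comp g h → m = degC C f → ∀ i, h i ∈ S n := by
    intro m g h hhC hf hm i
    by_contra hiS
    obtain ⟨c, hc⟩ := hconst n (h i) (hhC i) hiS
    cases m with
    | zero => exact i.elim0
    | succ k =>
      have hmem : k ∈ T := by
        refine ⟨fun a => g (i.insertNth c a),
          fun j => h (i.succAbove j), fun j => hhC _, ?_⟩
        funext a
        show f a = g (i.insertNth c fun j => h (i.succAbove j) a)
        rw [hf]
        show g (fun j => h j a) = _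
        congr 1
        have hca : c = (fun j => h j a) i := by simp only [hc]
        rw [hca]
        exact (Fin.insertNth_self_removeNth i _).symm
      have h1 : sInf T ≤ k := Nat.sInf_le hmem
      rw [hdegC] at hm
      omega
  refine ⟨key, ?_⟩
  rw [hdegC, hdegS]
  apply le_antisymm
  · exact Nat.sInf_le (hTS_sub_T (Nat.sInf_mem ⟨n, hnTS⟩))
  · obtain ⟨g, h, hh, hf⟩ := Nat.sInf_mem (⟨n, hnT⟩ : T.Nonempty)
    exact Nat.sInf_le ⟨g, h, key _ g h hh hf (by rw [hdegC]), hf⟩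
end
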